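/- arXiv:2004.13417 — 3 statements merged into one kernel-verified Lean document; each statement's English description precedes it below -/
import Mathlib

section
/- Let f : ℝ^n → ℝ be differentiable and μ-strongly convex with μ > 0, let a_1,…,a_m ∈ ℝ^n be nonzero and b_1,…,b_m ∈ ℝ. Let 0 < γ ≤ γ' and δ ≥ δ' > 0, and let x* be the (unique) minimizer of F_{γδ} over ℝ^n and y* the (unique) minimizer of F_{γ'δ'} over ℝ^n. Then μ ‖x* − y*‖ ≤ (γ' − γ) + γ (δ − δ')/(2δ). -/
open scoped RealInnerProductSpace

/-- The one-sided Huber penalty `h_δ(x; a, b)`. -/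
noncomputable def huber {n : ℕ} (δ : ℝ) (a : EuclideanSpace ℝ (Fin n)) (b : ℝ)
    (x : EuclideanSpace ℝ (Fin n)) : ℝ :=
  if δ < ⟪a, x⟫ - b then (⟪a, x⟫ - b) / ‖a‖
  else if -δ ≤ ⟪a, x⟫ - b then (⟪a, x⟫ - b + δ) ^ 2 / (4 * δ * ‖a‖)
  else 0


/-- squared positive part -/
noncomputable def sqp (x : ℝ) : ℝ := max 0 x ^ 2

lemma hasDerivAt_sqp (x : ℝ) : HasDerivAt sqp (2 * max 0 x) x := by
  rcases lt_trichotomy x 0 with hx | hx | hx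
  · rw [max_eq_left hx.le, mul_zero]
    refine (hasDerivAt_const x (0:ℝ)).congr_of_eventuallyEq ?_
    filter_upwards [Iio_mem_nhds hx] with y hy
    simp [sqp, max_eq_left (le_of_lt (Set.mem_Iio.mp hy))]
  · subst hx
    rw [hasDerivAt_iff_isLittleO]
    rw [Asymptotics.isLittleO_iff]
    intro c hc
    filter_upwards [Metric.ball_mem_nhds 0 hc] with y hy
    have h1 : |y| < c := by simpa [Real.dist_eq] using hy
    have h2 : max 0 y ≤ |y| := max_le (abs_nonneg y) (le_abs_self y)
    have h3 : (0:ℝ) ≤ max 0 y := le_max_left _ _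
    simp only [sqp, sub_zero, max_self, Real.norm_eq_abs]
    have : max 0 y ^ 2 ≤ |y| * |y| := by nlinarith
    calc |max 0 y ^ 2 - 0 ^ 2 - y • (2 * (0:ℝ))| = max 0 y ^ 2 := by
            simp [abs_of_nonneg (by positivity : (0:ℝ) ≤ max 0 y ^ 2)]
      _ ≤ |y| * |y| := this
      _ ≤ c * |y| := by nlinarith [abs_nonneg y]
  · rw [max_eq_right hx.le]
    have h : HasDerivAt (fun y : ℝ => y ^ 2) (2 * x) x := by
      simpa using hasDerivAt_pow 2 x
    refine h.congr_of_eventuallyEq ?_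
    filter_upwards [Ioi_mem_nhds hx] with y hy
    simp [sqp, max_eq_right (le_of_lt (Set.mem_Ioi.mp hy))]

/-- scalar Huber: `H_δ(t)` -/
noncomputable def Hh (δ t : ℝ) : ℝ := (sqp (t + δ) - sqp (t - δ)) / (4 * δ)

/-- derivative of `H_δ` -/
noncomputable def sl (δ t : ℝ) : ℝ := (max 0 (t + δ) - max 0 (t - δ)) / (2 * δ)

lemma hasDerivAt_Hh {δ : ℝ} (hδ : 0 < δ) (t : ℝ) : HasDerivAt (Hh δ) (sl δ t) t := by
  have h1 : HasDerivAt (fun t : ℝ => sqp (t + δ)) (2 * max 0 (t + δ)) t := by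
    have := (hasDerivAt_sqp (t + δ)).comp t ((hasDerivAt_id t).add_const δ)
    simp only [mul_one] at this
    exact this
  have h2 : HasDerivAt (fun t : ℝ => sqp (t - δ)) (2 * max 0 (t - δ)) t := by
    have := (hasDerivAt_sqp (t - δ)).comp t ((hasDerivAt_id t).sub_const δ)
    simp only [mul_one] at this
    exact this
  have h3 := (h1.sub h2).div_const (4 * δ)
  have he : (2 * max 0 (t + δ) - 2 * max 0 (t - δ)) / (4 * δ) = sl δ t := by
    rw [sl]; field_simp; ring
  rw [he] at h3
  exact h3

lemma max0_eq (x : ℝ) : max 0 x = (x + |x|) / 2 := by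
  rcases le_total x 0 with h | h
  · rw [max_eq_left h, abs_of_nonpos h]; ring
  · rw [max_eq_right h, abs_of_nonneg h]; ring

lemma sl_nonneg {δ : ℝ} (hδ : 0 < δ) (t : ℝ) : 0 ≤ sl δ t := by
  apply div_nonneg _ (by linarith)
  have : max 0 (t - δ) ≤ max 0 (t + δ) := max_le_max le_rfl (by linarith)
  linarith

lemma sl_le_one {δ : ℝ} (hδ : 0 < δ) (t : ℝ) : sl δ t ≤ 1 := by
  rw [sl, div_le_one (by linarith)]
  rcases le_total (t + δ) 0 with h | h
  · have h1 : max 0 (t + δ) = 0 := max_eq_left h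
    have h2 : (0:ℝ) ≤ max 0 (t - δ) := le_max_left _ _
    linarith
  · have h1 : max 0 (t + δ) = t + δ := max_eq_right h
    have h2 : t - δ ≤ max 0 (t - δ) := le_max_right _ _
    linarith

lemma sl_mono {δ : ℝ} (hδ : 0 < δ) : Monotone (sl δ) := by
  intro s t hst
  rw [sl, sl, div_le_div_iff_of_pos_right (by linarith)]
  rw [max0_eq, max0_eq, max0_eq, max0_eq]
  rcases abs_cases (s + δ) with ⟨e1, p1⟩ | ⟨e1, p1⟩ <;>
    rcases abs_cases (s - δ) with ⟨e2, p2⟩ | ⟨e2, p2⟩ <;>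
    rcases abs_cases (t + δ) with ⟨e3, p3⟩ | ⟨e3, p3⟩ <;>
    rcases abs_cases (t - δ) with ⟨e4, p4⟩ | ⟨e4, p4⟩ <;>
    linarith

lemma convexOn_Hh {δ : ℝ} (hδ : 0 < δ) : ConvexOn ℝ Set.univ (Hh δ) := by
  have hD : ∀ t, deriv (Hh δ) t = sl δ t := fun t => (hasDerivAt_Hh hδ t).deriv
  refine MonotoneOn.convexOn_of_deriv convex_univ ?_ ?_ ?_
  · exact fun t _ => ((hasDerivAt_Hh hδ t).continuousAt).continuousWithinAt
  · intro t _
    exact ((hasDerivAt_Hh hδ t).differentiableAt).differentiableWithinAt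
  · intro s _ t _ hst
    rw [hD, hD]
    exact sl_mono hδ hst

lemma huber_eq {n : ℕ} {δ : ℝ} (hδ : 0 < δ) (a : EuclideanSpace ℝ (Fin n)) (b : ℝ)
    (x : EuclideanSpace ℝ (Fin n)) : huber δ a b x = Hh δ (⟪a, x⟫ - b) / ‖a‖ := by
  set t := ⟪a, x⟫ - b with ht
  rw [huber, Hh]
  split_ifs with h1 h2
  · have e1 : sqp (t + δ) = (t + δ) ^ 2 := by
      rw [sqp, max_eq_right (by linarith)]
    have e2 : sqp (t - δ) = (t - δ) ^ 2 := by
      rw [sqp, max_eq_right (by linarith)]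
    rw [e1, e2]
    have e3 : ((t + δ) ^ 2 - (t - δ) ^ 2) / (4 * δ) = t := by
      rw [div_eq_iff (by positivity : (4:ℝ) * δ ≠ 0)]
      ring
    rw [e3]
  · have e1 : sqp (t + δ) = (t + δ) ^ 2 := by
      rw [sqp, max_eq_right (by linarith)]
    have e2 : sqp (t - δ) = 0 := by
      rw [sqp, max_eq_left (by linarith), zero_pow two_ne_zero]
    rw [e1, e2, sub_zero, div_div, mul_assoc]
  · have e1 : sqp (t + δ) = 0 := by
      rw [sqp, max_eq_left (by linarith), zero_pow two_ne_zero]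
    have e2 : sqp (t - δ) = 0 := by
      rw [sqp, max_eq_left (by linarith), zero_pow two_ne_zero]
    rw [e1, e2]
    simp

lemma sl_diff {δ δ' : ℝ} (hδ' : 0 < δ') (hδδ' : δ' ≤ δ) (t : ℝ) :
    |sl δ' t - sl δ t| ≤ (δ - δ') / (2 * δ) := by
  have hδ : 0 < δ := lt_of_lt_of_le hδ' hδδ'
  have h2δ : (0:ℝ) < 2 * δ := by linarith
  have h2δ' : (0:ℝ) < 2 * δ' := by linarith
  have hrhs : (0:ℝ) ≤ (δ - δ') / (2 * δ) := div_nonneg (by linarith) (by linarith)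
  rcases le_total t (-δ) with h | h
  · have e1 : sl δ t = 0 := by
      rw [sl, max_eq_left (by linarith), max_eq_left (by linarith)]; simp
    have e2 : sl δ' t = 0 := by
      rw [sl, max_eq_left (by linarith), max_eq_left (by linarith)]; simp
    rw [e1, e2]
    simpa using hrhs
  · rcases le_total t (-δ') with h2 | h2
    · have e1 : sl δ t = (t + δ) / (2 * δ) := by
        rw [sl, max_eq_right (by linarith), max_eq_left (by linarith)]; ring
      have e2 : sl δ' t = 0 := by
        rw [sl, max_eq_left (by linarith), max_eq_left (by linarith)]; simp
      rw [e1, e2, zero_sub, abs_neg,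
        abs_of_nonneg (div_nonneg (by linarith) (by linarith))]
      rw [div_le_div_iff_of_pos_right h2δ]
      linarith
    · rcases le_total t δ' with h3 | h3
      · have e1 : sl δ t = (t + δ) / (2 * δ) := by
          rw [sl, max_eq_right (by linarith), max_eq_left (by linarith)]; ring
        have e2 : sl δ' t = (t + δ') / (2 * δ') := by
          rw [sl, max_eq_right (by linarith), max_eq_left (by linarith)]; ring
        rw [e1, e2]
        have e3 : (t + δ') / (2 * δ') - (t + δ) / (2 * δ) = t * (δ - δ') / (2 * δ * δ') := by
          field_simp
          ring
        have e4 : |t * (δ - δ') / (2 * δ * δ')| = |t| * (δ - δ') / (2 * δ * δ') := by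
          rw [abs_div, abs_mul, abs_of_nonneg (by linarith : (0:ℝ) ≤ δ - δ'),
            abs_of_pos (by nlinarith : (0:ℝ) < 2 * δ * δ')]
        rw [e3, e4, div_le_div_iff₀ (by nlinarith) h2δ]
        have h4 : |t| ≤ δ' := abs_le.mpr ⟨by linarith, h3⟩
        have h5 : |t| * (δ - δ') * (2 * δ) ≤ δ' * (δ - δ') * (2 * δ) :=
          mul_le_mul_of_nonneg_right
            (mul_le_mul_of_nonneg_right h4 (by linarith)) (by linarith)
        linarith
      · rcases le_total t δ with h4 | h4
        · have e1 : sl δ t = (t + δ) / (2 * δ) := by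
            rw [sl, max_eq_right (by linarith), max_eq_left (by linarith)]; ring
          have e2 : sl δ' t = 1 := by
            rw [sl, max_eq_right (by linarith), max_eq_right (by linarith)]
            field_simp
            ring
          rw [e1, e2]
          have e3 : 1 - (t + δ) / (2 * δ) = (δ - t) / (2 * δ) := by field_simp; ring
          rw [e3, abs_of_nonneg (div_nonneg (by linarith) (by linarith))]
          rw [div_le_div_iff_of_pos_right h2δ]
          linarith
        · have e1 : sl δ t = 1 := by
            rw [sl, max_eq_right (by linarith), max_eq_right (by linarith)]
            field_simp; ring
          have e2 : sl δ' t = 1 := by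
            rw [sl, max_eq_right (by linarith), max_eq_right (by linarith)]
            field_simp; ring
          rw [e1, e2]
          simpa using hrhs

lemma slope_bound {γ γ' δ δ' : ℝ} (hγ : 0 < γ) (hγγ' : γ ≤ γ') (hδ' : 0 < δ')
    (hδδ' : δ' ≤ δ) (t : ℝ) :
    |γ * sl δ t - γ' * sl δ' t| ≤ (γ' - γ) + γ * (δ - δ') / (2 * δ) := by
  have hδ : 0 < δ := lt_of_lt_of_le hδ' hδδ'
  have h1 := sl_nonneg hδ t
  have h2 := sl_le_one hδ t
  have h3 := sl_nonneg hδ' t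
  have h4 := sl_le_one hδ' t
  have h5 := abs_le.mp (sl_diff hδ' hδδ' t)
  have he : γ * (δ - δ') / (2 * δ) = γ * ((δ - δ') / (2 * δ)) := by ring
  rw [he, abs_le]
  constructor
  · nlinarith [mul_le_mul_of_nonneg_left h5.1 hγ.le,
      mul_nonneg (sub_nonneg.mpr hγγ') h3,
      mul_le_mul_of_nonneg_left h4 (sub_nonneg.mpr hγγ')]
  · nlinarith [mul_le_mul_of_nonneg_left h5.2 hγ.le,
      mul_nonneg (sub_nonneg.mpr hγγ') h3,
      mul_le_mul_of_nonneg_left h4 (sub_nonneg.mpr hγγ')]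

lemma psi_lipschitz {γ γ' δ δ' : ℝ} (hγ : 0 < γ) (hγγ' : γ ≤ γ') (hδ' : 0 < δ')
    (hδδ' : δ' ≤ δ) (s t : ℝ) :
    |(γ * Hh δ s - γ' * Hh δ' s) - (γ * Hh δ t - γ' * Hh δ' t)| ≤
      ((γ' - γ) + γ * (δ - δ') / (2 * δ)) * |s - t| := by
  have hδ : 0 < δ := lt_of_lt_of_le hδ' hδδ'
  have hder : ∀ u ∈ Set.univ, HasDerivWithinAt (fun t => γ * Hh δ t - γ' * Hh δ' t)
      (γ * sl δ u - γ' * sl δ' u) Set.univ u := by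
    intro u _
    exact (((hasDerivAt_Hh hδ u).const_mul γ).sub
      ((hasDerivAt_Hh hδ' u).const_mul γ')).hasDerivWithinAt
  have hbound : ∀ u ∈ Set.univ, ‖γ * sl δ u - γ' * sl δ' u‖ ≤
      (γ' - γ) + γ * (δ - δ') / (2 * δ) := by
    intro u _
    exact slope_bound hγ hγγ' hδ' hδδ' u
  have := Convex.norm_image_sub_le_of_norm_hasDerivWithin_le hder hbound convex_univ
    (Set.mem_univ t) (Set.mem_univ s)
  simpa [Real.norm_eq_abs] using this

lemma convexOn_huber {n : ℕ} {δ : ℝ} (hδ : 0 < δ) (a : EuclideanSpace ℝ (Fin n)) (b : ℝ) :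
    ConvexOn ℝ Set.univ (huber δ a b) := by
  refine ⟨convex_univ, fun x _ y _ p q hp hq hpq => ?_⟩
  rw [huber_eq hδ, huber_eq hδ, huber_eq hδ]
  have hinner : ⟪a, p • x + q • y⟫ - b =
      p • (⟪a, x⟫ - b) + q • (⟪a, y⟫ - b) := by
    rw [inner_add_right, real_inner_smul_right, real_inner_smul_right]
    simp only [smul_eq_mul]
    linear_combination b * hpq
  rw [hinner]
  have h := (convexOn_Hh hδ).2 (Set.mem_univ (⟪a, x⟫ - b)) (Set.mem_univ (⟪a, y⟫ - b))
    hp hq hpq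
  simp only [smul_eq_mul] at h ⊢
  calc Hh δ (p * (⟪a, x⟫ - b) + q * (⟪a, y⟫ - b)) / ‖a‖
      ≤ (p * Hh δ (⟪a, x⟫ - b) + q * Hh δ (⟪a, y⟫ - b)) / ‖a‖ := by
        gcongr
    _ = p * (Hh δ (⟪a, x⟫ - b) / ‖a‖) + q * (Hh δ (⟪a, y⟫ - b) / ‖a‖) := by ring

/-- If `F` satisfies the strong convexity inequality and `x` minimizes `F`, then
`F y ≥ F x + (μ/2)‖x - y‖²`. -/
lemma strong_min {E : Type*} [NormedAddCommGroup E] [NormedSpace ℝ E] {F : E → ℝ} {μ : ℝ}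
    (hF : ∀ x y : E, ∀ p q : ℝ, 0 ≤ p → 0 ≤ q → p + q = 1 →
      F (p • x + q • y) ≤ p * F x + q * F y - p * q * (μ / 2 * ‖x - y‖ ^ 2))
    {x : E} (hmin : IsMinOn F Set.univ x) (y : E) :
    F x + μ / 2 * ‖x - y‖ ^ 2 ≤ F y := by
  set c : ℝ := μ / 2 * ‖x - y‖ ^ 2 with hc
  have hA : F x ≤ F y := isMinOn_iff.mp hmin y (Set.mem_univ y)
  have key : ∀ θ : ℝ, 0 < θ → θ ≤ 1 → (1 - θ) * c ≤ F y - F x := by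
    intro θ h1 h2
    have h3 := hF y x θ (1 - θ) h1.le (by linarith) (by ring)
    have h4 : F x ≤ F (θ • y + (1 - θ) • x) :=
      isMinOn_iff.mp hmin _ (Set.mem_univ _)
    have h6 : ‖y - x‖ = ‖x - y‖ := norm_sub_rev y x
    rw [h6, ← hc] at h3
    have h5 : θ * ((1 - θ) * c) ≤ θ * (F y - F x) := by nlinarith [h3, h4]
    exact (mul_le_mul_iff_right₀ h1).mp h5
  by_contra hcon
  push_neg at hcon
  have hAc : F y - F x < c := by linarith
  have hc0 : 0 < c := by
    by_contra hc0
    push_neg at hc0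
    linarith
  set θ : ℝ := (c - (F y - F x)) / (2 * c) with hθ
  have hθ1 : 0 < θ := div_pos (by linarith) (by linarith)
  have hθ2 : θ ≤ 1 := by
    rw [hθ, div_le_one (by linarith)]
    linarith
  have h7 := key θ hθ1 hθ2
  have h8 : (1 - θ) * c = c - (c - (F y - F x)) / 2 := by
    rw [hθ]
    field_simp
  rw [h8] at h7
  linarith

/-- For a differentiable `μ`-strongly convex `f` and penalty parameters `0 < γ ≤ γ'`,
`δ ≥ δ' > 0`, the minimizers `x*` of `F_{γδ}` and `y*` of `F_{γ'δ'}` satisfy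
`μ‖x* − y*‖ ≤ (γ' − γ) + γ(δ − δ')/(2δ)`. -/
theorem minimizers_dist_le {n m : ℕ} (hm : 0 < m) (μ : ℝ) (hμ : 0 < μ)
    (f : EuclideanSpace ℝ (Fin n) → ℝ) (hf : StrongConvexOn Set.univ μ f)
    (hdf : Differentiable ℝ f)
    (a : Fin m → EuclideanSpace ℝ (Fin n)) (ha : ∀ i, a i ≠ 0) (b : Fin m → ℝ)
    (γ γ' δ δ' : ℝ) (hγ : 0 < γ) (hγγ' : γ ≤ γ') (hδ' : 0 < δ') (hδδ' : δ' ≤ δ)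
    (xs ys : EuclideanSpace ℝ (Fin n))
    (hxs : IsMinOn (fun x => f x + (γ / m) * ∑ i, huber δ (a i) (b i) x) Set.univ xs)
    (hys : IsMinOn (fun x => f x + (γ' / m) * ∑ i, huber δ' (a i) (b i) x) Set.univ ys) :
    μ * ‖xs - ys‖ ≤ (γ' - γ) + γ * (δ - δ') / (2 * δ) := by
  have hδ : 0 < δ := lt_of_lt_of_le hδ' hδδ'
  set C : ℝ := (γ' - γ) + γ * (δ - δ') / (2 * δ) with hC
  have hC0 : 0 ≤ C :=
    add_nonneg (by linarith) (div_nonneg (by nlinarith) (by linarith))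
  have hm' : (0:ℝ) < (m:ℝ) := Nat.cast_pos.mpr hm
  -- convexity of the penalty terms
  have hpen : ∀ (c dd : ℝ), 0 ≤ c → 0 < dd →
      ∀ x y : EuclideanSpace ℝ (Fin n), ∀ p q : ℝ, 0 ≤ p → 0 ≤ q → p + q = 1 →
      c * ∑ i, huber dd (a i) (b i) (p • x + q • y) ≤
        p * (c * ∑ i, huber dd (a i) (b i) x) + q * (c * ∑ i, huber dd (a i) (b i) y) := by
    intro c dd hc hdd x y p q hp hq hpq
    have hsum : ∑ i, huber dd (a i) (b i) (p • x + q • y) ≤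
        ∑ i, (p * huber dd (a i) (b i) x + q * huber dd (a i) (b i) y) := by
      refine Finset.sum_le_sum fun i _ => ?_
      have := (convexOn_huber hdd (a i) (b i)).2 (Set.mem_univ x) (Set.mem_univ y) hp hq hpq
      simpa [smul_eq_mul] using this
    rw [Finset.sum_add_distrib, ← Finset.mul_sum, ← Finset.mul_sum] at hsum
    calc c * ∑ i, huber dd (a i) (b i) (p • x + q • y)
        ≤ c * (p * ∑ i, huber dd (a i) (b i) x + q * ∑ i, huber dd (a i) (b i) y) :=
          mul_le_mul_of_nonneg_left hsum hc
      _ = p * (c * ∑ i, huber dd (a i) (b i) x) + q * (c * ∑ i, huber dd (a i) (b i) y) := by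
          ring
  -- strong convexity of the penalized objectives
  have hFprop : ∀ (c dd : ℝ), 0 ≤ c → 0 < dd →
      ∀ x y : EuclideanSpace ℝ (Fin n), ∀ p q : ℝ, 0 ≤ p → 0 ≤ q → p + q = 1 →
      (fun z => f z + c * ∑ i, huber dd (a i) (b i) z) (p • x + q • y) ≤
        p * (fun z => f z + c * ∑ i, huber dd (a i) (b i) z) x +
        q * (fun z => f z + c * ∑ i, huber dd (a i) (b i) z) y -
        p * q * (μ / 2 * ‖x - y‖ ^ 2) := by
    intro c dd hc hdd x y p q hp hq hpq
    have h1 := hf.2 (Set.mem_univ x) (Set.mem_univ y) hp hq hpq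
    simp only [smul_eq_mul] at h1
    have h2 := hpen c dd hc hdd x y p q hp hq hpq
    simp only []
    linarith
  have h1 := strong_min (F := fun z => f z + (γ / m) * ∑ i, huber δ (a i) (b i) z)
    (hFprop (γ / m) δ (div_nonneg hγ.le hm'.le) hδ) hxs ys
  have h2 := strong_min (F := fun z => f z + (γ' / m) * ∑ i, huber δ' (a i) (b i) z)
    (hFprop (γ' / m) δ' (div_nonneg (by linarith) hm'.le) hδ') hys xs
  have h1' : f xs + (γ / m) * ∑ i, huber δ (a i) (b i) xs + μ / 2 * ‖xs - ys‖ ^ 2 ≤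
      f ys + (γ / m) * ∑ i, huber δ (a i) (b i) ys := h1
  have h2' : f ys + (γ' / m) * ∑ i, huber δ' (a i) (b i) ys + μ / 2 * ‖ys - xs‖ ^ 2 ≤
      f xs + (γ' / m) * ∑ i, huber δ' (a i) (b i) xs := h2
  rw [norm_sub_rev ys xs] at h2'
  -- per-index Lipschitz bound
  have per : ∀ i, γ * huber δ (a i) (b i) ys - γ * huber δ (a i) (b i) xs
      + γ' * huber δ' (a i) (b i) xs - γ' * huber δ' (a i) (b i) ys ≤ C * ‖xs - ys‖ := by
    intro i
    rw [huber_eq hδ, huber_eq hδ, huber_eq hδ', huber_eq hδ']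
    set tx := ⟪a i, xs⟫ - b i with htx
    set ty := ⟪a i, ys⟫ - b i with hty
    have hna : 0 < ‖a i‖ := norm_pos_iff.mpr (ha i)
    have hlip := psi_lipschitz hγ hγγ' hδ' hδδ' ty tx
    have hip : |ty - tx| ≤ ‖a i‖ * ‖xs - ys‖ := by
      have e : ty - tx = ⟪a i, ys - xs⟫ := by
        rw [inner_sub_right, hty, htx]; ring
      rw [e]
      have h := abs_real_inner_le_norm (a i) (ys - xs)
      rwa [norm_sub_rev ys xs] at h
    have e : γ * (Hh δ ty / ‖a i‖) - γ * (Hh δ tx / ‖a i‖)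
        + γ' * (Hh δ' tx / ‖a i‖) - γ' * (Hh δ' ty / ‖a i‖)
        = ((γ * Hh δ ty - γ' * Hh δ' ty) - (γ * Hh δ tx - γ' * Hh δ' tx)) / ‖a i‖ := by
      field_simp
      ring
    rw [e]
    calc ((γ * Hh δ ty - γ' * Hh δ' ty) - (γ * Hh δ tx - γ' * Hh δ' tx)) / ‖a i‖
        ≤ (C * |ty - tx|) / ‖a i‖ := by
          gcongr
          exact le_trans (le_abs_self _) hlip
      _ ≤ (C * (‖a i‖ * ‖xs - ys‖)) / ‖a i‖ := by gcongr
      _ = C * ‖xs - ys‖ := by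
          field_simp
  -- sum up
  have hsum := Finset.sum_le_sum (fun i (_ : i ∈ Finset.univ) => per i)
  rw [Finset.sum_const, Finset.card_univ, Fintype.card_fin, nsmul_eq_mul] at hsum
  have expand : ∑ i, (γ * huber δ (a i) (b i) ys - γ * huber δ (a i) (b i) xs
      + γ' * huber δ' (a i) (b i) xs - γ' * huber δ' (a i) (b i) ys)
      = γ * ∑ i, huber δ (a i) (b i) ys - γ * ∑ i, huber δ (a i) (b i) xs
      + γ' * ∑ i, huber δ' (a i) (b i) xs - γ' * ∑ i, huber δ' (a i) (b i) ys := by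
    rw [Finset.mul_sum, Finset.mul_sum, Finset.mul_sum, Finset.mul_sum,
      ← Finset.sum_sub_distrib, ← Finset.sum_add_distrib, ← Finset.sum_sub_distrib]
  rw [expand] at hsum
  -- combine
  have key : μ * ‖xs - ys‖ ^ 2 ≤ C * ‖xs - ys‖ := by
    have hmain : (γ / m) * ∑ i, huber δ (a i) (b i) ys - (γ / m) * ∑ i, huber δ (a i) (b i) xs
        + (γ' / m) * ∑ i, huber δ' (a i) (b i) xs - (γ' / m) * ∑ i, huber δ' (a i) (b i) ys
        ≤ C * ‖xs - ys‖ := by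
      have hE : γ / ↑m * ∑ i, huber δ (a i) (b i) ys - γ / ↑m * ∑ i, huber δ (a i) (b i) xs
          + γ' / ↑m * ∑ i, huber δ' (a i) (b i) xs - γ' / ↑m * ∑ i, huber δ' (a i) (b i) ys
          = (γ * ∑ i, huber δ (a i) (b i) ys - γ * ∑ i, huber δ (a i) (b i) xs
          + γ' * ∑ i, huber δ' (a i) (b i) xs - γ' * ∑ i, huber δ' (a i) (b i) ys) / ↑m := by
        field_simp
      rw [hE, div_le_iff₀ hm']
      nlinarith [hsum]
    have h3 : μ * ‖xs - ys‖ ^ 2 ≤ γ / ↑m * ∑ i, huber δ (a i) (b i) ys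
        - γ / ↑m * ∑ i, huber δ (a i) (b i) xs
        + γ' / ↑m * ∑ i, huber δ' (a i) (b i) xs
        - γ' / ↑m * ∑ i, huber δ' (a i) (b i) ys := by linarith
    exact h3.trans hmain
  rcases eq_or_lt_of_le (norm_nonneg (xs - ys)) with h0 | h0
  · rw [← h0, mul_zero]
    exact hC0
  · have hmul : (μ * ‖xs - ys‖) * ‖xs - ys‖ ≤ C * ‖xs - ys‖ := by nlinarith [key]
    exact le_of_mul_le_mul_right hmul h0
end

section
/- Let f : ℝ^n → ℝ be μ-strongly convex with μ > 0, let a_1,…,a_m ∈ ℝ^n be nonzero and b_1,…,b_m ∈ ℝ, and assume the feasible set X = {x : ⟨a_i,x⟩ ≤ b_i for all i} is nonempty, with x* the minimizer of f over X. Let c > 0 and let {γ_k}, {δ_k} be sequences with γ_k > 0, δ_k > 0 and γ_k δ_k ≤ c for all k, and for each k let x_k* be the minimizer of F_{γ_k δ_k} over ℝ^n. Then every x_k* lies in the level set {x ∈ ℝ^n : f(x) ≤ f(x*) + c/(4 α_min)}, where α_min = min_{1≤i≤m} ‖a_i‖; in particular the sequence {x_k*} is bounded. -/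
open scoped RealInnerProductSpace

lemma huber_nonneg {n : ℕ} {δ : ℝ} (hδ : 0 < δ) (a : EuclideanSpace ℝ (Fin n)) (b : ℝ)
    (x : EuclideanSpace ℝ (Fin n)) : 0 ≤ huber δ a b x := by
  unfold huber
  split_ifs with h1 h2
  · exact div_nonneg (by linarith) (norm_nonneg a)
  · positivity
  · exact le_refl 0

lemma huber_le {n : ℕ} {δ : ℝ} (hδ : 0 < δ) {a : EuclideanSpace ℝ (Fin n)} (hA : 0 < ‖a‖)
    {b : ℝ} {x : EuclideanSpace ℝ (Fin n)} (ht : ⟪a, x⟫ - b ≤ 0) :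
    huber δ a b x ≤ δ / (4 * ‖a‖) := by
  unfold huber
  set t := ⟪a, x⟫ - b with hts
  split_ifs with h1 h2
  · linarith
  · rw [div_le_div_iff₀ (by positivity) (by positivity)]
    nlinarith [mul_nonneg (mul_nonneg (neg_nonneg.2 ht) (by linarith : (0:ℝ) ≤ t + 2*δ)) hA.le]
  · positivity

lemma sublevel_bound {n : ℕ} {μ : ℝ} (hμ : 0 < μ)
    {f : EuclideanSpace ℝ (Fin n) → ℝ} (hf : StrongConvexOn Set.univ μ f)
    (z : EuclideanSpace ℝ (Fin n)) (M : ℝ) :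
    ∃ R, ∀ x, f x ≤ M → ‖x - z‖ ≤ R := by
  have hconv : ConvexOn ℝ Set.univ f := hf.convexOn (fun r => by positivity)
  have hcont : Continuous f := by
    have := hconv.continuousOn isOpen_univ
    rwa [continuousOn_univ] at this
  obtain ⟨w0, _, hw0⟩ := (isCompact_closedBall z 1).exists_isMinOn
    ⟨z, Metric.mem_closedBall_self zero_le_one⟩ hcont.continuousOn
  set K := f w0 with hK
  set C := max M 0 + max (f z) 0 - K with hC
  refine ⟨max 2 (4 * C / μ), fun x hx => ?_⟩
  set d := ‖x - z‖ with hd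
  rcases le_or_gt d 2 with h | h
  · exact h.trans (le_max_left _ _)
  · have hd0 : 0 < d := by linarith
    set t := 1 / d with ht
    have ht0 : 0 < t := by positivity
    have ht1 : t ≤ 1 / 2 := by
      rw [ht]
      rw [div_le_div_iff₀ hd0 (by norm_num)]
      linarith
    have hp := hf.2 (Set.mem_univ x) (Set.mem_univ z) ht0.le (by linarith : (0:ℝ) ≤ 1 - t)
      (by ring)
    simp only [smul_eq_mul, ← hd] at hp
    have hpz : ‖(t • x + (1 - t) • z) - z‖ = 1 := by
      have h2 : (t • x + (1 - t) • z) - z = t • (x - z) := by module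
      rw [h2, norm_smul, Real.norm_eq_abs, abs_of_pos ht0, ← hd, ht]
      field_simp
    have hKp : K ≤ f (t • x + (1 - t) • z) := by
      apply hw0
      rw [Metric.mem_closedBall, dist_eq_norm, hpz]
    have htd : t * d ^ 2 = d := by rw [ht]; field_simp
    have h2 : t * (1 - t) * (μ / 2 * d ^ 2) = (1 - t) * (μ / 2) * d := by
      calc t * (1 - t) * (μ / 2 * d ^ 2) = (1 - t) * (μ / 2) * (t * d ^ 2) := by ring
        _ = (1 - t) * (μ / 2) * d := by rw [htd]
    have hfx : t * f x ≤ max M 0 := by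
      rcases le_or_gt 0 M with h' | h'
      · nlinarith [le_max_left M 0, mul_le_mul_of_nonneg_left hx ht0.le]
      · nlinarith [le_max_right M 0, mul_le_mul_of_nonneg_left hx ht0.le]
    have hfz : (1 - t) * f z ≤ max (f z) 0 := by
      rcases le_or_gt 0 (f z) with h' | h'
      · nlinarith [le_max_left (f z) 0]
      · nlinarith [le_max_right (f z) 0]
    have hmd : μ / 4 * d ≤ C := by
      have h3 : (1 - t) * (μ / 2) * d ≥ (1 / 2) * (μ / 2) * d := by
        nlinarith [mul_nonneg hμ.le hd0.le]
      nlinarith [hp, hKp]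
    have : d ≤ 4 * C / μ := by
      rw [le_div_iff₀ hμ]; linarith
    exact this.trans (le_max_right _ _)

/-- If `γ_k δ_k ≤ c` for all `k`, then the minimizers `x_k*` of the penalized problems lie in
the level set `{x : f(x) ≤ f(x*) + c/(4 α_min)}`; in particular they form a bounded sequence. -/
theorem penalized_minimizers_in_level_set {n m : ℕ} (hm : 0 < m) (μ : ℝ) (hμ : 0 < μ)
    (f : EuclideanSpace ℝ (Fin n) → ℝ) (hf : StrongConvexOn Set.univ μ f)
    (a : Fin m → EuclideanSpace ℝ (Fin n)) (ha : ∀ i, a i ≠ 0) (b : Fin m → ℝ)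
    (X : Set (EuclideanSpace ℝ (Fin n)))
    (hX : X = {x | ∀ i, ⟪a i, x⟫ ≤ b i}) (hXne : X.Nonempty)
    (xstar : EuclideanSpace ℝ (Fin n)) (hxstarX : xstar ∈ X) (hxstar : IsMinOn f X xstar)
    (c : ℝ) (hc : 0 < c) (γ δ : ℕ → ℝ) (hγ : ∀ k, 0 < γ k) (hδ : ∀ k, 0 < δ k)
    (hγδ : ∀ k, γ k * δ k ≤ c)
    (xk : ℕ → EuclideanSpace ℝ (Fin n))
    (hxk : ∀ k, IsMinOn (fun x => f x + (γ k / m) * ∑ i, huber (δ k) (a i) (b i) x)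
      Set.univ (xk k)) :
    (∀ k, f (xk k) ≤ f xstar + c / (4 * ⨅ i, ‖a i‖)) ∧
      Bornology.IsBounded (Set.range xk) := by
  haveI : Nonempty (Fin m) := ⟨⟨0, hm⟩⟩
  set α : ℝ := ⨅ i, ‖a i‖ with hα
  obtain ⟨i0, hi0⟩ := Finite.exists_min fun i => ‖a i‖
  have hαpos : 0 < α := lt_of_lt_of_le (norm_pos_iff.mpr (ha i0)) (le_ciInf hi0)
  have hαle : ∀ i, α ≤ ‖a i‖ := fun i =>
    ciInf_le (Set.Finite.bddBelow (Set.finite_range _)) i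
  have hm' : (0 : ℝ) < m := Nat.cast_pos.mpr hm
  have key : ∀ k, f (xk k) ≤ f xstar + c / (4 * α) := by
    intro k
    have hmin := isMinOn_iff.mp (hxk k) xstar (Set.mem_univ _)
    have hpen_xk : 0 ≤ γ k / m * ∑ i, huber (δ k) (a i) (b i) (xk k) :=
      mul_nonneg (div_nonneg (hγ k).le hm'.le)
        (Finset.sum_nonneg fun i _ => huber_nonneg (hδ k) _ _ _)
    have hpen_star : γ k / m * ∑ i, huber (δ k) (a i) (b i) xstar ≤ c / (4 * α) := by
      have hsum : ∑ i, huber (δ k) (a i) (b i) xstar ≤ m * (δ k / (4 * α)) := by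
        calc ∑ i, huber (δ k) (a i) (b i) xstar ≤ ∑ _i : Fin m, δ k / (4 * α) := by
              apply Finset.sum_le_sum
              intro i _
              refine (huber_le (hδ k) (norm_pos_iff.mpr (ha i)) ?_).trans ?_
              · rw [hX] at hxstarX
                exact sub_nonpos.mpr (hxstarX i)
              · apply div_le_div_of_nonneg_left (hδ k).le (by positivity)
                linarith [hαle i]
          _ = m * (δ k / (4 * α)) := by
              rw [Finset.sum_const, Finset.card_univ, Fintype.card_fin, nsmul_eq_mul]
      calc γ k / m * ∑ i, huber (δ k) (a i) (b i) xstar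
          ≤ γ k / m * (m * (δ k / (4 * α))) :=
            mul_le_mul_of_nonneg_left hsum (div_nonneg (hγ k).le hm'.le)
        _ = γ k * δ k / (4 * α) := by field_simp
        _ ≤ c / (4 * α) := by
            apply div_le_div_of_nonneg_right (hγδ k) (by positivity)
    linarith
  refine ⟨key, ?_⟩
  obtain ⟨R, hR⟩ := sublevel_bound hμ hf xstar (f xstar + c / (4 * α))
  have hsub : Set.range xk ⊆ Metric.closedBall xstar R := by
    rintro _ ⟨k, rfl⟩
    rw [Metric.mem_closedBall, dist_eq_norm]
    exact hR _ (key k)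
  exact (Metric.isBounded_closedBall (x := xstar) (r := R)).subset hsub
end

section
/- Under the hypotheses of the error-bound lemma (f differentiable and μ-strongly convex, X = ∩_{i=1}^m {x : ⟨a_i,x⟩ ≤ b_i} nonempty with minimizer x* of f over X, x_γδ* the minimizer of F_{γδ}, p = Π_X[x_γδ*], β > 0 a Hoffman constant with β Σ_i dist(x,X_i) ≥ dist(x,X) for all x, and L ≥ ‖∇f(z)‖ on the segment joining x_γδ* and p), if moreover γ > 4mβL, then dist(x_γδ*, X) ≤ (mβ γδ)/(α_min (γ − 4mβL)), where α_min = min_{1≤i≤m} ‖a_i‖. -/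
open scoped RealInnerProductSpace

/-- Distance to a halfspace is at most the residual formula. -/
lemma infDist_halfspace_le {n : ℕ} (a : EuclideanSpace ℝ (Fin n)) (ha : a ≠ 0) (b : ℝ)
    (x : EuclideanSpace ℝ (Fin n)) :
    Metric.infDist x {y : EuclideanSpace ℝ (Fin n) | ⟪a, y⟫ ≤ b}
      ≤ max (⟪a, x⟫ - b) 0 / ‖a‖ := by
  have hna : (0:ℝ) < ‖a‖ := norm_pos_iff.mpr ha
  set t : ℝ := ⟪a, x⟫ - b with ht
  set y : EuclideanSpace ℝ (Fin n) := x - (max t 0 / ‖a‖ ^ 2) • a with hy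
  have hmem : y ∈ {y : EuclideanSpace ℝ (Fin n) | ⟪a, y⟫ ≤ b} := by
    simp only [hy, Set.mem_setOf_eq, inner_sub_right, real_inner_smul_right,
      real_inner_self_eq_norm_sq]
    have : max t 0 / ‖a‖ ^ 2 * ‖a‖ ^ 2 = max t 0 := by
      field_simp
    rw [this]
    have := le_max_left t 0
    simp only [ht] at this ⊢
    linarith
  have hdist : dist x y = max t 0 / ‖a‖ := by
    rw [dist_eq_norm]
    simp only [hy, sub_sub_cancel, norm_smul, Real.norm_eq_abs]
    rw [abs_of_nonneg (by positivity)]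
    rw [div_mul_eq_mul_div, sq]
    field_simp
  calc Metric.infDist x {y : EuclideanSpace ℝ (Fin n) | ⟪a, y⟫ ≤ b} ≤ dist x y :=
        Metric.infDist_le_dist_of_mem hmem
    _ = max t 0 / ‖a‖ := hdist

lemma residual_le_huber {n : ℕ} (δ : ℝ) (hδ : 0 < δ) (a : EuclideanSpace ℝ (Fin n))
    (ha : a ≠ 0) (b : ℝ) (x : EuclideanSpace ℝ (Fin n)) :
    max (⟪a, x⟫ - b) 0 / ‖a‖ ≤ huber δ a b x := by
  have hna : (0:ℝ) < ‖a‖ := norm_pos_iff.mpr ha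
  unfold huber
  set t : ℝ := ⟪a, x⟫ - b with ht
  split_ifs with h1 h2
  · rw [max_eq_left (by linarith)]
  · rcases le_or_gt t 0 with h | h
    · rw [max_eq_right h, zero_div]; positivity
    · rw [max_eq_left h.le]
      rw [div_le_div_iff₀ hna (by positivity)]
      nlinarith [sq_nonneg (t - δ)]
  · push_neg at h2
    rw [max_eq_right (by linarith)]
    simp

lemma huber_le_of_feasible {n : ℕ} (δ : ℝ) (hδ : 0 < δ) (a : EuclideanSpace ℝ (Fin n))
    (ha : a ≠ 0) (b : ℝ) (p : EuclideanSpace ℝ (Fin n)) (hp : ⟪a, p⟫ ≤ b) :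
    huber δ a b p ≤ δ / (4 * ‖a‖) := by
  have hna : (0:ℝ) < ‖a‖ := norm_pos_iff.mpr ha
  unfold huber
  set t : ℝ := ⟪a, p⟫ - b with ht
  have htle : t ≤ 0 := sub_nonpos.mpr hp
  split_ifs with h1 h2
  · linarith
  · rw [div_le_div_iff₀ (by positivity) (by positivity)]
    nlinarith [mul_nonneg (mul_nonneg (neg_nonneg.mpr htle) (by linarith : (0:ℝ) ≤ t + 2*δ)) hna.le]
  · positivity

/-- Under the error-bound lemma hypotheses, if moreover `γ > 4mβL`, then
`dist(x_{γδ}*, X) ≤ mβγδ/(α_min(γ − 4mβL))`. -/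
theorem penalized_dist_bound {n m : ℕ} (hm : 0 < m) (μ : ℝ) (hμ : 0 < μ)
    (f : EuclideanSpace ℝ (Fin n) → ℝ) (hf : StrongConvexOn Set.univ μ f)
    (hdf : Differentiable ℝ f)
    (a : Fin m → EuclideanSpace ℝ (Fin n)) (ha : ∀ i, a i ≠ 0) (b : Fin m → ℝ)
    (X : Set (EuclideanSpace ℝ (Fin n)))
    (hX : X = {x | ∀ i, ⟪a i, x⟫ ≤ b i}) (hXne : X.Nonempty)
    (xstar : EuclideanSpace ℝ (Fin n)) (hxstarX : xstar ∈ X) (hxstar : IsMinOn f X xstar)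
    (γ δ : ℝ) (hγ : 0 < γ) (hδ : 0 < δ)
    (xg : EuclideanSpace ℝ (Fin n))
    (hxg : IsMinOn (fun x => f x + (γ / m) * ∑ i, huber δ (a i) (b i) x) Set.univ xg)
    (p : EuclideanSpace ℝ (Fin n)) (hpX : p ∈ X) (hproj : ∀ y ∈ X, ‖xg - p‖ ≤ ‖xg - y‖)
    (β : ℝ) (hβ : 0 < β)
    (hHoffman : ∀ x, Metric.infDist x X ≤
      β * ∑ i, Metric.infDist x {y : EuclideanSpace ℝ (Fin n) | ⟪a i, y⟫ ≤ b i})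
    (L : ℝ) (hL : 0 < L) (hLbound : ∀ z ∈ segment ℝ xg p, ‖gradient f z‖ ≤ L)
    (hγL : 4 * m * β * L < γ) :
    Metric.infDist xg X ≤ m * β * γ * δ / ((⨅ i, ‖a i‖) * (γ - 4 * m * β * L)) := by
  haveI : Nonempty (Fin m) := ⟨⟨0, hm⟩⟩
  set α : ℝ := ⨅ i, ‖a i‖ with hα
  have hαle : ∀ i, α ≤ ‖a i‖ := fun i =>
    ciInf_le (Set.Finite.bddBelow (Set.finite_range _)) i
  have hαpos : 0 < α := by
    obtain ⟨i, hi⟩ := exists_eq_ciInf_of_finite (f := fun i => ‖a i‖)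
    rw [hα, ← hi]
    exact norm_pos_iff.mpr (ha i)
  set M : ℝ := (m : ℝ) with hM
  have hMpos : (0:ℝ) < M := by rw [hM]; exact_mod_cast hm
  set d : ℝ := Metric.infDist xg X with hd
  have hd0 : 0 ≤ d := Metric.infDist_nonneg
  -- d = ‖xg - p‖
  have hdp : d = ‖xg - p‖ := by
    refine le_antisymm ?_ ?_
    · rw [hd, ← dist_eq_norm]
      exact Metric.infDist_le_dist_of_mem hpX
    · by_contra hlt
      push_neg at hlt
      rw [hd, ← dist_eq_norm] at hlt
      obtain ⟨y, hyX, hy⟩ := (Metric.infDist_lt_iff hXne).mp hlt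
      have := hproj y hyX
      rw [← dist_eq_norm, ← dist_eq_norm] at this
      linarith
  -- minimality of xg
  have hF : f xg + (γ / M) * ∑ i, huber δ (a i) (b i) xg
      ≤ f p + (γ / M) * ∑ i, huber δ (a i) (b i) p := isMinOn_iff.mp hxg p (Set.mem_univ p)
  -- feasible point sum bound
  have hpX' : ∀ i, ⟪a i, p⟫ ≤ b i := by rw [hX] at hpX; exact hpX
  have hSp : ∑ i, huber δ (a i) (b i) p ≤ M * (δ / (4 * α)) := by
    calc ∑ i, huber δ (a i) (b i) p ≤ ∑ _i : Fin m, δ / (4 * α) := by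
          apply Finset.sum_le_sum
          intro i _
          refine le_trans (huber_le_of_feasible δ hδ (a i) (ha i) (b i) p (hpX' i)) ?_
          apply div_le_div_of_nonneg_left hδ.le (by positivity)
          have := hαle i
          nlinarith
      _ = M * (δ / (4 * α)) := by
          rw [Finset.sum_const, Finset.card_univ, Fintype.card_fin, nsmul_eq_mul]
  -- Hoffman + huber lower bound
  have hSx : d / β ≤ ∑ i, huber δ (a i) (b i) xg := by
    rw [div_le_iff₀ hβ, mul_comm]
    calc d ≤ β * ∑ i, Metric.infDist xg {y : EuclideanSpace ℝ (Fin n) | ⟪a i, y⟫ ≤ b i} :=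
          hHoffman xg
      _ ≤ β * ∑ i, huber δ (a i) (b i) xg := by
          apply mul_le_mul_of_nonneg_left _ hβ.le
          apply Finset.sum_le_sum
          intro i _
          exact le_trans (infDist_halfspace_le (a i) (ha i) (b i) xg)
            (residual_le_huber δ hδ (a i) (ha i) (b i) xg)
  -- mean value bound
  have hMVT : f p - f xg ≤ L * d := by
    have hseg : Convex ℝ (segment ℝ xg p) := convex_segment xg p
    have hbound : ∀ z ∈ segment ℝ xg p, ‖fderiv ℝ f z‖ ≤ L := by
      intro z hz
      have : ‖gradient f z‖ = ‖fderiv ℝ f z‖ := by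
        unfold gradient
        exact LinearIsometryEquiv.norm_map _ _
      rw [← this]
      exact hLbound z hz
    have := hseg.norm_image_sub_le_of_norm_fderiv_le (fun z _ => hdf z) hbound
      (left_mem_segment ℝ xg p) (right_mem_segment ℝ xg p)
    rw [Real.norm_eq_abs] at this
    have h1 : f p - f xg ≤ L * ‖p - xg‖ := le_trans (le_abs_self _) this
    rw [norm_sub_rev] at h1
    rw [hdp]
    exact h1
  -- combine
  have hkey : (γ / M) * (d / β) ≤ L * d + γ * δ / (4 * α) := by
    have h1 : (γ / M) * (d / β) ≤ (γ / M) * ∑ i, huber δ (a i) (b i) xg :=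
      mul_le_mul_of_nonneg_left hSx (by positivity)
    have h2 : (γ / M) * ∑ i, huber δ (a i) (b i) p ≤ (γ / M) * (M * (δ / (4 * α))) :=
      mul_le_mul_of_nonneg_left hSp (by positivity)
    have h3 : (γ / M) * (M * (δ / (4 * α))) = γ * δ / (4 * α) := by
      field_simp
    calc (γ / M) * (d / β) ≤ (γ / M) * ∑ i, huber δ (a i) (b i) xg := h1
      _ ≤ (f p - f xg) + (γ / M) * ∑ i, huber δ (a i) (b i) p := by linarith
      _ ≤ L * d + γ * δ / (4 * α) := by rw [← h3]; linarith
  -- clear denominators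
  have hkey' : γ * d ≤ (L * d + γ * δ / (4 * α)) * (M * β) := by
    rw [div_mul_div_comm] at hkey
    exact (div_le_iff₀ (by positivity)).mp hkey
  have hkey2 : 4 * α * (γ * d) ≤ 4 * α * (M * β * L * d) + M * β * γ * δ := by
    have h5 := mul_le_mul_of_nonneg_left hkey' (show (0:ℝ) ≤ 4 * α by positivity)
    have heq : 4 * α * ((L * d + γ * δ / (4 * α)) * (M * β))
        = 4 * α * (M * β * L * d) + M * β * γ * δ := by
      field_simp
    rw [heq] at h5
    linarith
  -- final arithmetic
  rw [le_div_iff₀ (by nlinarith)]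
  nlinarith [mul_nonneg (mul_nonneg hd0 hαpos.le) hγ.le, mul_nonneg hd0 hαpos.le,
    mul_nonneg (mul_nonneg hd0 hβ.le) hL.le]
end
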